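/- Let G be a δ-hyperbolic group with finite generating set S. There is a computable constant M, depending only on δ, |S|, and the word lengths |u| and |v|, such that if two elements u, v ∈ G are conjugate in G, then there exists g ∈ G with u = g v g⁻¹ and |g| ≤ M. -/

import Mathlib

/-- Word length of `x` with respect to a generating set `S` (and inverses). -/
noncomputable def wordLength {G : Type*} [Group G] (S : Set G) (x : G) : ℕ :=
  sInf {n : ℕ | ∃ f : Fin n → G, (∀ i, f i ∈ S ∨ (f i)⁻¹ ∈ S) ∧ x = (List.ofFn f).prod}

/-- The word metric on `G` with respect to `S`. -/
noncomputable def wdist {G : Type*} [Group G] (S : Set G) (x y : G) : ℝ :=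
  wordLength S (x⁻¹ * y)

/-- The Cayley graph of `G` w.r.t. `S` is δ-hyperbolic (four-point condition on the
word metric). -/
def IsHyperbolicGroup {G : Type*} [Group G] (S : Set G) (δ : ℝ) : Prop :=
  ∀ x y z w : G, wdist S x w + wdist S y z ≤
    max (wdist S x y + wdist S z w) (wdist S x z + wdist S y w) + 2 * δ

section aux
variable {G : Type*} [Group G] (S : Set G)

def goodList (L : List G) : Prop := ∀ a ∈ L, a ∈ S ∨ a⁻¹ ∈ S

lemma wordLength_eq_sInf (x : G) :
    wordLength S x = sInf {n : ℕ | ∃ L : List G, goodList S L ∧ L.length = n ∧ x = L.prod} := by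
  apply congrArg sInf
  ext n
  constructor
  · rintro ⟨f, hf, rfl⟩
    exact ⟨List.ofFn f, fun a ha => by
      obtain ⟨i, rfl⟩ := List.mem_ofFn.1 ha; exact hf i, by simp, rfl⟩
  · rintro ⟨L, hL, rfl, rfl⟩
    exact ⟨L.get, fun i => hL _ (L.get_mem _), by simp⟩

variable {S}

lemma wordLength_le {x : G} {L : List G} (hL : goodList S L) (hx : x = L.prod) :
    wordLength S x ≤ L.length := by
  rw [wordLength_eq_sInf]
  exact Nat.sInf_le ⟨L, hL, rfl, hx⟩

lemma exists_min_rep (hrep : ∀ x : G, ∃ L : List G, goodList S L ∧ x = L.prod) (x : G) :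
    ∃ L : List G, goodList S L ∧ L.length = wordLength S x ∧ x = L.prod := by
  rw [wordLength_eq_sInf]
  have hne : {n : ℕ | ∃ L : List G, goodList S L ∧ L.length = n ∧ x = L.prod}.Nonempty := by
    obtain ⟨L, hL, hx⟩ := hrep x
    exact ⟨L.length, L, hL, rfl, hx⟩
  exact Nat.sInf_mem hne

lemma rep_of_closure (h : Subgroup.closure S = ⊤) (x : G) :
    ∃ L : List G, goodList S L ∧ x = L.prod := by
  have hx : x ∈ (Subgroup.closure S).toSubmonoid := by rw [h]; trivial
  rw [Subgroup.closure_toSubmonoid] at hx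
  obtain ⟨L, hL, hx⟩ := Submonoid.exists_list_of_mem_closure hx
  refine ⟨L, fun a ha => ?_, hx.symm⟩
  rcases hL a ha with h' | h'
  · exact Or.inl h'
  · exact Or.inr (Set.mem_inv.1 h')

lemma wordLength_mul_le (hrep : ∀ x : G, ∃ L : List G, goodList S L ∧ x = L.prod) (x y : G) :
    wordLength S (x * y) ≤ wordLength S x + wordLength S y := by
  obtain ⟨L, hL, hlen, hx⟩ := exists_min_rep hrep x
  obtain ⟨L', hL', hlen', hy⟩ := exists_min_rep hrep y
  have : wordLength S (x * y) ≤ (L ++ L').length :=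
    wordLength_le (fun a ha => (List.mem_append.1 ha).elim (hL a) (hL' a))
      (by rw [List.prod_append, hx, hy])
  simpa [hlen, hlen'] using this

lemma wordLength_inv_le (x : G) :
    wordLength S x⁻¹ ≤ wordLength S x := by
  by_cases hne : {n : ℕ | ∃ L : List G, goodList S L ∧ L.length = n ∧ x = L.prod}.Nonempty
  · have := Nat.sInf_mem hne
    obtain ⟨L, hL, hlen, hx⟩ := this
    have : wordLength S x⁻¹ ≤ ((L.map Inv.inv).reverse).length := by
      refine wordLength_le (fun a ha => ?_) ?_
      · simp only [List.mem_reverse, List.mem_map] at ha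
        obtain ⟨b, hb, rfl⟩ := ha
        rcases hL b hb with h' | h'
        · exact Or.inr (by simpa using h')
        · exact Or.inl h'
      · rw [hx, List.prod_inv_reverse]
    rw [wordLength_eq_sInf (S := S) x, ← hlen]
    simpa using this
  · have hne' : ¬ {n : ℕ | ∃ L : List G, goodList S L ∧ L.length = n ∧ x⁻¹ = L.prod}.Nonempty := by
      rintro ⟨n, L, hL, hlen, hx⟩
      refine hne ⟨((L.map Inv.inv).reverse).length, (L.map Inv.inv).reverse, fun a ha => ?_, rfl, ?_⟩
      · simp only [List.mem_reverse, List.mem_map] at ha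
        obtain ⟨b, hb, rfl⟩ := ha
        rcases hL b hb with h' | h'
        · exact Or.inr (by simpa using h')
        · exact Or.inl h'
      · rw [← List.prod_inv_reverse, ← hx, inv_inv]
    rw [wordLength_eq_sInf (S := S) x⁻¹, Set.not_nonempty_iff_eq_empty.1 hne', Nat.sInf_empty]
    exact Nat.zero_le _


lemma wordLength_inv (x : G) : wordLength S x⁻¹ = wordLength S x :=
  le_antisymm (wordLength_inv_le x) (by simpa using wordLength_inv_le (S := S) x⁻¹)

lemma wordLength_one : wordLength S (1 : G) = 0 :=
  Nat.le_zero.1 (by simpa using wordLength_le (S := S) (L := []) (fun a ha => by simp at ha) (by simp))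

end aux

section metric
variable {G : Type*} [Group G] {S : Set G}
  (hrep : ∀ x : G, ∃ L : List G, goodList S L ∧ x = L.prod)

lemma wdist_cast (x y : G) : wdist S x y = (wordLength S (x⁻¹ * y) : ℝ) := rfl

lemma wdist_nonneg' (x y : G) : 0 ≤ wdist S x y := by
  rw [wdist_cast]; positivity

include hrep

lemma wdist_triangle' (x y z : G) : wdist S x z ≤ wdist S x y + wdist S y z := by
  simp only [wdist_cast, ← Nat.cast_add, Nat.cast_le]
  have : x⁻¹ * z = (x⁻¹ * y) * (y⁻¹ * z) := by group
  rw [this]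
  exact wordLength_mul_le hrep _ _

omit hrep

lemma wdist_comm' (x y : G) : wdist S x y = wdist S y x := by
  simp only [wdist_cast, Nat.cast_inj]
  rw [← wordLength_inv]
  simp [mul_inv_rev]

lemma wdist_left_inv (g x y : G) : wdist S (g * x) (g * y) = wdist S x y := by
  simp [wdist_cast, mul_inv_rev, mul_assoc]

include hrep

/-- geodesic prefixes -/
lemma prefix_lengths {L : List G} (hL : goodList S L) {g : G} (hg : g = L.prod)
    (hgeo : wordLength S g = L.length) (i : ℕ) (hi : i ≤ L.length) :
    wordLength S (L.take i).prod = i ∧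
    wordLength S ((L.take i).prod⁻¹ * g) = L.length - i := by
  set a := (L.take i).prod
  set b := (L.drop i).prod
  have hab : g = a * b := by rw [hg, ← List.prod_append, List.take_append_drop]
  have hA : wordLength S a ≤ i := by
    have := wordLength_le (x := a) (L := L.take i)
      (fun c hc => hL c (List.mem_of_mem_take hc)) rfl
    simpa [List.length_take, Nat.min_eq_left hi] using this
  have hB : wordLength S b ≤ L.length - i := by
    have := wordLength_le (x := b) (L := L.drop i)
      (fun c hc => hL c (List.mem_of_mem_drop hc)) rfl
    simpa using this
  have hsum : L.length ≤ wordLength S a + wordLength S b := by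
    rw [← hgeo, hab]
    exact wordLength_mul_le hrep _ _
  have h1 : wordLength S a = i := by omega
  have h2 : wordLength S b = L.length - i := by omega
  have hb' : a⁻¹ * g = b := by rw [hab]; group
  exact ⟨h1, by rw [hb', h2]⟩

end metric

section hyp
variable {G : Type*} [Group G] {S : Set G} {δ : ℝ}
  (hrep : ∀ x : G, ∃ L : List G, goodList S L ∧ x = L.prod)

lemma wdist_one_left (x : G) : wdist S 1 x = (wordLength S x : ℝ) := by
  simp [wdist_cast]

include hrep

lemma middle_bound (hδ : 0 ≤ δ) (H : IsHyperbolicGroup S δ) (u g a : G)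
    (hgeo : wordLength S a + wordLength S (a⁻¹ * g) = wordLength S g) :
    (wordLength S (a⁻¹ * u * a) : ℝ) ≤
      wordLength S u + 2 * wordLength S (g⁻¹ * u * g) + 4 * δ := by
  set v : G := g⁻¹ * u * g with hv
  set i : ℕ := wordLength S a
  set n : ℕ := wordLength S g
  have hin : i ≤ n := by omega
  -- basic distances
  have f1 : wdist S 1 a = (i : ℝ) := by rw [wdist_one_left]
  have f7 : wdist S 1 g = (n : ℝ) := by rw [wdist_one_left]
  have f2 : wdist S a g = (n : ℝ) - i := by
    rw [wdist_cast]
    have : (wordLength S (a⁻¹ * g) : ℝ) = (n : ℝ) - i := by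
      have := congrArg (Nat.cast : ℕ → ℝ) hgeo
      push_cast at this; linarith
    exact this
  have hug : u * g = g * v := by rw [hv]; group
  have f6 : wdist S g (u * g) = (wordLength S v : ℝ) := by
    rw [hug, wdist_cast]
    congr 2
    group
  have f4 : wdist S (u * a) (u * g) = (n : ℝ) - i := by rw [wdist_left_inv, f2]
  have huua : wdist S u (u * a) = (i : ℝ) := by
    have : wdist S (u * 1) (u * a) = wdist S 1 a := wdist_left_inv u 1 a
    simpa [f1] using this
  have f3 : wdist S 1 (u * a) ≤ (wordLength S u : ℝ) + i := by
    have ht := wdist_triangle' hrep 1 u (u * a)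
    have h1u : wdist S 1 u = (wordLength S u : ℝ) := wdist_one_left u
    linarith [ht, huua.le]
  have f5 : (n : ℝ) ≤ wdist S 1 (u * g) + wordLength S v := by
    have ht := wdist_triangle' hrep 1 (u * g) g
    have hc : wdist S (u * g) g = (wordLength S v : ℝ) := by rw [wdist_comm', f6]
    linarith [ht]
  have hgoal : wdist S a (u * a) = (wordLength S (a⁻¹ * u * a) : ℝ) := by
    rw [wdist_cast]; congr 2; group
  rw [← hgoal]
  have hc1 : wdist S a 1 = (i : ℝ) := by rw [wdist_comm', f1]
  have hc2 : wdist S (u * a) 1 = wdist S 1 (u * a) := wdist_comm' _ _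
  have hc3 : wdist S g (u * a) = wdist S (u * a) g := wdist_comm' _ _
  have hc4 : wdist S (u * g) g = (wordLength S v : ℝ) := by rw [wdist_comm', f6]
  have A1 := H a 1 g (u * a)
  have A2 := H (u * a) 1 (u * g) g
  rw [f7, hc1, f2, hc3] at A1
  rw [hc2, hc4, f4, f7] at A2
  have hiR : (i : ℝ) ≤ (n : ℝ) := by exact_mod_cast hin
  rcases max_cases ((i : ℝ) + wdist S (u * a) g) (((n : ℝ) - i) + wdist S 1 (u * a)) with
    ⟨hm1, _⟩ | ⟨hm1, _⟩ <;>
  rcases max_cases (wdist S 1 (u * a) + (wordLength S v : ℝ)) (((n : ℝ) - i) + n) with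
    ⟨hm2, _⟩ | ⟨hm2, _⟩ <;>
  · rw [hm1] at A1
    rw [hm2] at A2
    linarith [wdist_nonneg' (S := S) (u * a) g]

end hyp

section count
variable {G : Type*} [Group G]

lemma pigeon (S : Finset G)
    (hrep : ∀ x : G, ∃ L : List G, goodList (S : Set G) L ∧ x = L.prod)
    (K m : ℕ) (hm : (2 * S.card + 1) ^ (K + 1) < m)
    (F : Fin m → G) (hF : ∀ i, wordLength (S : Set G) (F i) ≤ K) :
    ∃ i j, i ≠ j ∧ F i = F j := by
  classical
  set T : Finset G := S ∪ S.image (·⁻¹) with hT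
  have hTcard : T.card ≤ 2 * S.card := by
    calc T.card ≤ S.card + (S.image (·⁻¹)).card := Finset.card_union_le _ _
    _ ≤ S.card + S.card := by have := Finset.card_image_le (s := S) (f := (·⁻¹)); omega
    _ = 2 * S.card := by ring
  -- choose minimal representative lists
  have hrep' := fun i => exists_min_rep hrep (F i)
  choose L hL hlen hprod using hrep'
  have hmemT : ∀ i, ∀ a ∈ L i, a ∈ T := by
    intro i a ha
    rcases hL i a ha with h | h
    · exact Finset.mem_union_left _ h
    · refine Finset.mem_union_right _ ?_
      exact Finset.mem_image.2 ⟨a⁻¹, h, by simp⟩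
  have hlenK : ∀ i, (L i).length ≤ K := fun i => (hlen i).symm ▸ (hlen i ▸ hF i)
  -- encoding
  set enc : Fin m → (Fin (K + 1) → Option {a // a ∈ T}) := fun i j =>
    if h : (j : ℕ) < (L i).length then some ⟨(L i).get ⟨j, h⟩, hmemT i _ (List.get_mem _ _)⟩
    else none with henc
  have hcard : Fintype.card (Fin (K + 1) → Option {a // a ∈ T}) < Fintype.card (Fin m) := by
    rw [Fintype.card_fun, Fintype.card_option, Fintype.card_coe, Fintype.card_fin,
      Fintype.card_fin]
    calc (T.card + 1) ^ (K + 1) ≤ (2 * S.card + 1) ^ (K + 1) :=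
      Nat.pow_le_pow_left (by omega) _
    _ < m := hm
  obtain ⟨i, j, hij, hE⟩ := Fintype.exists_ne_map_eq_of_card_lt enc hcard
  refine ⟨i, j, hij, ?_⟩
  -- recover list equality
  have hlij : (L i).length = (L j).length := by
    by_contra hne
    rcases Nat.lt_or_ge (L i).length (L j).length with h | h
    · have := congrFun hE ⟨(L i).length, by have := hlenK i; omega⟩
      simp only [henc] at this
      rw [dif_neg (lt_irrefl _), dif_pos h] at this
      exact absurd this (by simp)
    · have h' : (L j).length < (L i).length := by omega
      have := congrFun hE ⟨(L j).length, by have := hlenK j; omega⟩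
      simp only [henc] at this
      rw [dif_pos h', dif_neg (lt_irrefl _)] at this
      exact absurd this (by simp)
  have hLeq : L i = L j := by
    refine List.ext_get hlij (fun t h1 h2 => ?_)
    have := congrFun hE ⟨t, by have := hlenK i; omega⟩
    simp only [henc] at this
    rw [dif_pos h1, dif_pos h2] at this
    exact congrArg Subtype.val (Option.some_injective _ this)
  rw [hprod i, hprod j, hLeq]

end count

/-- In a δ-hyperbolic group, if `u` and `v` are conjugate then there is a conjugator
of word length bounded by a constant `M` depending only on `δ`, `|S|`, `|u|` and
`|v|`. -/
theorem statement4 :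
    ∃ M : ℝ → ℕ → ℕ → ℕ → ℕ,
      ∀ (G : Type) (_ : Group G) (S : Finset G) (δ : ℝ), 0 ≤ δ →
        Subgroup.closure (S : Set G) = ⊤ →
        IsHyperbolicGroup (S : Set G) δ →
        ∀ u v : G, (∃ g : G, u = g * v * g⁻¹) →
          ∃ g : G, u = g * v * g⁻¹ ∧
            wordLength (S : Set G) g ≤
              M δ S.card (wordLength (S : Set G) u) (wordLength (S : Set G) v) := by
  refine ⟨fun δ s a b => (2 * s + 1) ^ (a + 2 * b + ⌈4 * δ⌉₊ + 1), ?_⟩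
  intro G _ S δ hδ hclos hhyp u v hconj
  classical
  have hrep := rep_of_closure hclos
  set K : ℕ := wordLength (S : Set G) u + 2 * wordLength (S : Set G) v + ⌈4 * δ⌉₊ with hK
  set M : ℕ := (2 * S.card + 1) ^ (K + 1) with hM
  -- minimal conjugator
  set C : Set ℕ := {k | ∃ g : G, u = g * v * g⁻¹ ∧ wordLength (S : Set G) g = k} with hC
  have hCne : C.Nonempty := by obtain ⟨g, hg⟩ := hconj; exact ⟨_, g, hg, rfl⟩
  obtain ⟨g, hg, hgn⟩ := Nat.sInf_mem hCne
  refine ⟨g, hg, ?_⟩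
  show wordLength (S : Set G) g ≤ M
  by_contra hlt
  push_neg at hlt
  obtain ⟨L, hL, hlen, hprod⟩ := exists_min_rep hrep g
  set n : ℕ := wordLength (S : Set G) g with hn
  -- the conjugated elements along the geodesic
  set F : Fin (n + 1) → G := fun i =>
    ((L.take (i : ℕ)).prod)⁻¹ * u * (L.take (i : ℕ)).prod with hF
  have hvg : g⁻¹ * u * g = v := by rw [hg]; group
  have hFbound : ∀ i, wordLength (S : Set G) (F i) ≤ K := by
    intro i
    have hi : (i : ℕ) ≤ L.length := by have := i.isLt; omega
    obtain ⟨h1, h2⟩ := prefix_lengths hrep hL hprod hlen.symm (i : ℕ) hi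
    have hgeo : wordLength (S : Set G) (L.take (i : ℕ)).prod +
        wordLength (S : Set G) ((L.take (i : ℕ)).prod⁻¹ * g) = wordLength (S : Set G) g := by
      rw [h1, h2, ← hn]; omega
    have hmb := middle_bound hrep hδ hhyp u g (L.take (i : ℕ)).prod hgeo
    rw [hvg] at hmb
    have hceil : (4 : ℝ) * δ ≤ (⌈4 * δ⌉₊ : ℝ) := Nat.le_ceil _
    have : (wordLength (S : Set G) (F i) : ℝ) ≤ (K : ℝ) := by
      rw [hK]
      push_cast
      calc (wordLength (S : Set G) (F i) : ℝ) ≤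
          wordLength (S : Set G) u + 2 * wordLength (S : Set G) v + 4 * δ := hmb
      _ ≤ _ := by linarith
    exact_mod_cast this
  have hm : (2 * S.card + 1) ^ (K + 1) < n + 1 := by omega
  obtain ⟨i, j, hij, hEq⟩ := pigeon S hrep K (n + 1) hm F hFbound
  -- wlog i < j
  wlog hij' : (i : ℕ) < (j : ℕ) generalizing i j
  · exact this j i hij.symm hEq.symm (by omega)
  -- construct shorter conjugator
  set a : G := (L.take (i : ℕ)).prod with ha
  set b : G := (L.take (j : ℕ)).prod with hb
  have hib : (i : ℕ) ≤ L.length := by have := i.isLt; omega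
  have hjb : (j : ℕ) ≤ L.length := by have := j.isLt; omega
  obtain ⟨hi1, hi2⟩ := prefix_lengths hrep hL hprod hlen.symm (i : ℕ) hib
  obtain ⟨hj1, hj2⟩ := prefix_lengths hrep hL hprod hlen.symm (j : ℕ) hjb
  set g' : G := a * (b⁻¹ * g) with hg'
  have heq : a⁻¹ * u * a = b⁻¹ * u * b := hEq
  have hconj' : u = g' * v * g'⁻¹ := by
    have : g' * v * g'⁻¹ = u := by
      rw [hg', ← hvg]
      calc a * (b⁻¹ * g) * (g⁻¹ * u * g) * (a * (b⁻¹ * g))⁻¹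
          = a * (b⁻¹ * u * b) * a⁻¹ := by group
      _ = a * (a⁻¹ * u * a) * a⁻¹ := by rw [heq]
      _ = u := by group
    exact this.symm
  have hshort : wordLength (S : Set G) g' ≤ (i : ℕ) + (L.length - (j : ℕ)) := by
    calc wordLength (S : Set G) g' ≤
        wordLength (S : Set G) a + wordLength (S : Set G) (b⁻¹ * g) :=
      wordLength_mul_le hrep _ _
    _ = (i : ℕ) + (L.length - (j : ℕ)) := by rw [hi1, hj2]
  have hmin : n ≤ wordLength (S : Set G) g' := by
    rw [hgn]
    exact Nat.sInf_le ⟨g', hconj', rfl⟩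
  have hjlt : (j : ℕ) < n + 1 := j.isLt
  omega
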